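/- Let n ≥ 3 and m ≥ 1 be integers and r > 0. Let I ⊆ ℝ be an open interval and let f, φ, h : I → ℝ be positive twice differentiable functions with f'(ξ) ≠ 0 and φ'(ξ) ≠ 0 for all ξ ∈ I, satisfying on I the system: (n−2)fhφ'' − rfφh'' − mhφf'' − 2mhφ'f' − 2rfφ'h' = 0; fhφφ'' − (n−1)fh(φ')² + mhφφ'f' + rfφφ'h' = 0; and −fhφ²f'' + (n−2)fhφφ'f' − (m−1)hφ²(f')² − rfφ²f'h' = 0. Then there exists a nonzero constant k ∈ ℝ such that φ'(ξ)f(ξ) = k·φ(ξ)f'(ξ) for all ξ ∈ I. -/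

import Mathlib

/-- On an open interval, positive twice differentiable solutions of the
translation-invariant quasi-Einstein system (with `ρ = 0` and Ricci-flat fiber) having
nonvanishing `f'` and `φ'` satisfy `φ'·f = k·φ·f'` for some nonzero constant `k`. -/
theorem stmt3 (n m : ℕ) (hn : 3 ≤ n) (hm : 1 ≤ m) (r : ℝ) (hr : 0 < r)
    (I : Set ℝ) (hIopen : IsOpen I) (hIconn : I.OrdConnected)
    (f f' f'' φ φ' φ'' h h' h'' : ℝ → ℝ)
    (hfd : ∀ ξ ∈ I, HasDerivAt f (f' ξ) ξ) (hfd2 : ∀ ξ ∈ I, HasDerivAt f' (f'' ξ) ξ)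
    (hφd : ∀ ξ ∈ I, HasDerivAt φ (φ' ξ) ξ) (hφd2 : ∀ ξ ∈ I, HasDerivAt φ' (φ'' ξ) ξ)
    (hhd : ∀ ξ ∈ I, HasDerivAt h (h' ξ) ξ) (hhd2 : ∀ ξ ∈ I, HasDerivAt h' (h'' ξ) ξ)
    (hfpos : ∀ ξ ∈ I, 0 < f ξ) (hφpos : ∀ ξ ∈ I, 0 < φ ξ) (hhpos : ∀ ξ ∈ I, 0 < h ξ)
    (hf'ne : ∀ ξ ∈ I, f' ξ ≠ 0) (hφ'ne : ∀ ξ ∈ I, φ' ξ ≠ 0)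
    (heq1 : ∀ ξ ∈ I,
      (n - 2 : ℝ) * f ξ * h ξ * φ'' ξ - r * f ξ * φ ξ * h'' ξ - m * h ξ * φ ξ * f'' ξ
        - 2 * m * h ξ * φ' ξ * f' ξ - 2 * r * f ξ * φ' ξ * h' ξ = 0)
    (heq2 : ∀ ξ ∈ I,
      f ξ * h ξ * φ ξ * φ'' ξ - (n - 1 : ℝ) * f ξ * h ξ * (φ' ξ) ^ 2
        + m * h ξ * φ ξ * φ' ξ * f' ξ + r * f ξ * φ ξ * φ' ξ * h' ξ = 0)
    (heq3 : ∀ ξ ∈ I,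
      -(f ξ) * h ξ * (φ ξ) ^ 2 * f'' ξ + (n - 2 : ℝ) * f ξ * h ξ * φ ξ * φ' ξ * f' ξ
        - (m - 1 : ℝ) * h ξ * (φ ξ) ^ 2 * (f' ξ) ^ 2
        - r * f ξ * (φ ξ) ^ 2 * f' ξ * h' ξ = 0) :
    ∃ k : ℝ, k ≠ 0 ∧ ∀ ξ ∈ I, φ' ξ * f ξ = k * φ ξ * f' ξ := by

  rcases Set.eq_empty_or_nonempty I with hI | ⟨ξ₀, hξ₀⟩
  · exact ⟨1, one_ne_zero, fun ξ hξ => by simp [hI] at hξ⟩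
  set g : ℝ → ℝ := fun ξ => φ' ξ * f ξ * (φ ξ * f' ξ)⁻¹ with hg
  have hden : ∀ ξ ∈ I, φ ξ * f' ξ ≠ 0 := fun ξ hξ =>
    mul_ne_zero (hφpos ξ hξ).ne' (hf'ne ξ hξ)
  have hgd : ∀ ξ ∈ I, HasDerivAt g 0 ξ := by
    intro ξ hξ
    have h1 : HasDerivAt (fun x => φ' x * f x) (φ'' ξ * f ξ + φ' ξ * f' ξ) ξ :=
      (hφd2 ξ hξ).mul (hfd ξ hξ)
    have h2 : HasDerivAt (fun x => φ x * f' x) (φ' ξ * f' ξ + φ ξ * f'' ξ) ξ :=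
      (hφd ξ hξ).mul (hfd2 ξ hξ)
    have h3 := h2.inv (hden ξ hξ)
    have h4 := h1.mul h3
    have hD : (φ'' ξ * f ξ + φ' ξ * f' ξ) * (φ ξ * f' ξ)
        - φ' ξ * f ξ * (φ' ξ * f' ξ + φ ξ * f'' ξ) = 0 := by
      have h0 : h ξ * (((φ'' ξ * f ξ + φ' ξ * f' ξ) * (φ ξ * f' ξ)
          - φ' ξ * f ξ * (φ' ξ * f' ξ + φ ξ * f'' ξ)) * φ ξ) = 0 := by
        linear_combination φ ξ * f' ξ * heq2 ξ hξ + φ' ξ * heq3 ξ hξ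
      rcases mul_eq_zero.mp h0 with h'' | h''
      · exact absurd h'' (hhpos ξ hξ).ne'
      · rcases mul_eq_zero.mp h'' with h3' | h3'
        · exact h3'
        · exact absurd h3' (hφpos ξ hξ).ne'
    have hne := hden ξ hξ
    have key : (φ'' ξ * f ξ + φ' ξ * f' ξ) * (φ ξ * f' ξ)⁻¹
        + φ' ξ * f ξ * (-(φ' ξ * f' ξ + φ ξ * f'' ξ) / (φ ξ * f' ξ) ^ 2) = 0 := by
      linear_combination ((φ ξ * f' ξ)⁻¹) ^ 2 * hD
        - ((φ'' ξ * f ξ + φ' ξ * f' ξ) * (φ ξ * f' ξ)⁻¹) * mul_inv_cancel₀ hne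
    simp only [Pi.inv_apply] at h4
    rw [key] at h4
    exact h4
  have hgdiff : DifferentiableOn ℝ g I := fun ξ hξ =>
    ((hgd ξ hξ).differentiableAt).differentiableWithinAt
  have hconst : ∀ ξ ∈ I, g ξ = g ξ₀ := by
    intro ξ hξ
    refine (convex_iff_ordConnected.mpr hIconn).is_const_of_fderivWithin_eq_zero hgdiff
      (fun x hx => ?_) hξ hξ₀
    have := ((hgd x hx).hasFDerivAt.hasFDerivWithinAt (s := I)).fderivWithin
      (hIopen.uniqueDiffWithinAt hx)
    rw [this]
    ext y
    simp
  refine ⟨g ξ₀, ?_, fun ξ hξ => ?_⟩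
  · simp only [hg]
    exact mul_ne_zero (mul_ne_zero (hφ'ne ξ₀ hξ₀) (hfpos ξ₀ hξ₀).ne')
      (inv_ne_zero (hden ξ₀ hξ₀))
  · have h0 := hconst ξ hξ
    have hne := hden ξ hξ
    have hne0 := hden ξ₀ hξ₀
    simp only [hg] at h0 ⊢
    linear_combination (φ ξ * f' ξ) * h0 - (φ' ξ * f ξ) * mul_inv_cancel₀ hne
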